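/- For p ∈ (0, 2), the function f_p(w) = ∫₀^∞ x^{p-1} e^{-x²} sin(wx) dx vanishes only at w = 0; that is, f_p(w) ≠ 0 for all w ≠ 0. -/

import Mathlib

open MeasureTheory Real Set Finset

namespace FpAux


/-- rising factorial (Pochhammer) -/
def poch (a : ℝ) : ℕ → ℝ
  | 0 => 1
  | n + 1 => poch a n * (a + n)

@[simp] lemma poch_zero (a : ℝ) : poch a 0 = 1 := rfl

lemma poch_succ (a : ℝ) (n : ℕ) : poch a (n + 1) = poch a n * (a + n) := rfl

lemma poch_succ' (a : ℝ) : ∀ n : ℕ, poch a (n + 1) = a * poch (a + 1) n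
  | 0 => by simp [poch]
  | n + 1 => by
      rw [poch_succ, poch_succ' a n, poch_succ]
      push_cast; ring

lemma poch_pos {a : ℝ} (ha : 0 < a) : ∀ n, 0 < poch a n
  | 0 => one_pos
  | n + 1 => mul_pos (poch_pos ha n) (by positivity)

lemma poch_nonneg {a : ℝ} (ha : 0 ≤ a) : ∀ n, 0 ≤ poch a n
  | 0 => zero_le_one
  | n + 1 => mul_nonneg (poch_nonneg ha n) (by positivity)

lemma poch_le_poch {a b : ℝ} (ha : 0 ≤ a) (hab : a ≤ b) : ∀ n, poch a n ≤ poch b n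
  | 0 => le_refl 1
  | n + 1 => by
      rw [poch_succ, poch_succ]
      exact mul_le_mul (poch_le_poch ha hab n) (by linarith) (by positivity)
        ((poch_nonneg (ha.trans hab)) n)

/-- Chu–Vandermonde. -/
lemma cv : ∀ n : ℕ, ∀ b c : ℝ, 0 < b →
    ∑ k ∈ range (n + 1), (-1 : ℝ) ^ k * (n.choose k) * poch c k / poch b k
      = poch (b - c) n / poch b n := by
  intro n
  induction n with
  | zero => intro b c hb; simp
  | succ n ih =>
    intro b c hb
    have hb' : (b : ℝ) ≠ 0 := ne_of_gt hb
    have hP : (0:ℝ) < poch b n := poch_pos hb n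
    have hR : (0:ℝ) < poch (b+1) n := poch_pos (by linarith) n
    calc ∑ k ∈ range (n + 2), (-1:ℝ)^k * ((n+1).choose k) * poch c k / poch b k
        = (∑ k ∈ range (n + 1),
            (-1:ℝ)^(k+1) * ((n+1).choose (k+1)) * poch c (k+1) / poch b (k+1))
            + (-1:ℝ)^0 * (((n+1).choose 0 : ℕ)) * poch c 0 / poch b 0 :=
          sum_range_succ' _ (n+1)
      _ = (∑ k ∈ range (n + 1),
            ((-1:ℝ)^(k+1) * (n.choose (k+1)) * poch c (k+1) / poch b (k+1)
              + (-(c/b)) * ((-1:ℝ)^k * (n.choose k) * poch (c+1) k / poch (b+1) k)))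
            + (-1:ℝ)^0 * ((n.choose 0 : ℕ)) * poch c 0 / poch b 0 := by
          congr 1
          · refine sum_congr rfl fun k _ => ?_
            have hpb : poch b (k+1) = b * poch (b+1) k := poch_succ' b k
            have hpc : poch c (k+1) = c * poch (c+1) k := poch_succ' c k
            have hRk : poch (b+1) k ≠ 0 := ne_of_gt (poch_pos (by linarith) k)
            rw [Nat.choose_succ_succ, hpb, hpc]
            push_cast
            field_simp
            ring
          · simp
      _ = ((∑ k ∈ range (n + 1),
            (-1:ℝ)^(k+1) * (n.choose (k+1)) * poch c (k+1) / poch b (k+1))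
            + (-1:ℝ)^0 * ((n.choose 0 : ℕ)) * poch c 0 / poch b 0)
            + (-(c/b)) * ∑ k ∈ range (n + 1),
                (-1:ℝ)^k * (n.choose k) * poch (c+1) k / poch (b+1) k := by
          rw [sum_add_distrib, ← mul_sum]; ring
      _ = (∑ k ∈ range (n + 2), (-1:ℝ)^k * (n.choose k) * poch c k / poch b k)
            + (-(c/b)) * ∑ k ∈ range (n + 1),
                (-1:ℝ)^k * (n.choose k) * poch (c+1) k / poch (b+1) k := by
          rw [sum_range_succ' (fun k => (-1:ℝ)^k * (n.choose k) * poch c k / poch b k) (n+1)]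
      _ = (∑ k ∈ range (n + 1), (-1:ℝ)^k * (n.choose k) * poch c k / poch b k)
            + (-(c/b)) * ∑ k ∈ range (n + 1),
                (-1:ℝ)^k * (n.choose k) * poch (c+1) k / poch (b+1) k := by
          rw [sum_range_succ]
          simp [Nat.choose_succ_self]
      _ = poch (b - c) (n+1) / poch b (n+1) := by
          rw [ih b c hb, ih (b+1) (c+1) (by linarith)]
          have hbc : b + 1 - (c + 1) = b - c := by ring
          rw [hbc]
          have hRP : poch (b+1) n = poch b n * (b + n) / b := by
            have h1 : b * poch (b+1) n = poch b n * (b + n) := by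
              rw [← poch_succ' b n, poch_succ]
            field_simp
            linarith [h1]
          rw [hRP, poch_succ (b-c) n, poch_succ b n]
          have hbn : b + (n:ℝ) ≠ 0 := by positivity
          field_simp
          ring

/-- `(2n+1)! = 4^n (3/2)_n n!` -/
lemma fact_eq : ∀ n : ℕ, ((Nat.factorial (2*n+1)) : ℝ)
      = 4^n * poch (3/2) n * ((Nat.factorial n) : ℝ)
  | 0 => by simp [poch]
  | n + 1 => by
      have h : 2*(n+1)+1 = (2*n+1) + 2 := by ring
      rw [h]
      rw [show Nat.factorial ((2*n+1)+2)
          = ((2*n+1)+2) * (((2*n+1)+1) * Nat.factorial (2*n+1)) by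
        rw [Nat.factorial_succ, Nat.factorial_succ]]
      push_cast
      rw [fact_eq n, poch_succ, Nat.factorial_succ]
      push_cast
      ring





lemma exp_tsum (u : ℝ) : Real.exp u = ∑' n : ℕ, u ^ n / (Nat.factorial n : ℝ) := by
  rw [Real.exp_eq_exp_ℝ, NormedSpace.exp_eq_tsum_div]

lemma summable_exp_norm (u : ℝ) :
    Summable fun n : ℕ => ‖u ^ n / (Nat.factorial n : ℝ)‖ := by
  have := Real.summable_pow_div_factorial |u|
  refine this.congr fun n => ?_
  rw [norm_div, norm_pow, Real.norm_eq_abs, Real.norm_natCast]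

lemma B_nonneg {c : ℝ} (hc : 0 ≤ c) (n : ℕ) :
    0 ≤ poch c n / (poch (3/2) n * (Nat.factorial n : ℝ)) := by
  have h1 := poch_nonneg hc n
  have h2 := poch_pos (by norm_num : (0:ℝ) < 3/2) n
  positivity

lemma B_le {c : ℝ} (hc : 0 ≤ c) (hc' : c ≤ 3/2) (n : ℕ) :
    poch c n / (poch (3/2) n * (Nat.factorial n : ℝ)) ≤ 1 / (Nat.factorial n : ℝ) := by
  have h2 := poch_pos (by norm_num : (0:ℝ) < 3/2) n
  have h3 := poch_le_poch hc hc' n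
  have h4 : (0:ℝ) < (Nat.factorial n : ℝ) := by positivity
  rw [div_le_div_iff₀ (by positivity) h4]
  calc poch c n * (Nat.factorial n : ℝ) ≤ poch (3/2) n * (Nat.factorial n : ℝ) := by
        exact mul_le_mul_of_nonneg_right h3 h4.le
    _ = 1 * (poch (3/2) n * (Nat.factorial n : ℝ)) := by ring

lemma summable_B_norm {c : ℝ} (hc : 0 ≤ c) (hc' : c ≤ 3/2) (u : ℝ) :
    Summable fun n : ℕ =>
      ‖poch c n / (poch (3/2) n * (Nat.factorial n : ℝ)) * u ^ n‖ := by
  refine Summable.of_nonneg_of_le (fun n => norm_nonneg _) (fun n => ?_)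
    (Real.summable_pow_div_factorial |u|)
  rw [norm_mul, norm_pow, Real.norm_eq_abs, Real.norm_eq_abs,
    abs_of_nonneg (B_nonneg hc n)]
  calc poch c n / (poch (3/2) n * (Nat.factorial n : ℝ)) * |u| ^ n
      ≤ 1 / (Nat.factorial n : ℝ) * |u| ^ n := by
        exact mul_le_mul_of_nonneg_right (B_le hc hc' n) (by positivity)
    _ = |u| ^ n / (Nat.factorial n : ℝ) := by ring

lemma summable_B {c : ℝ} (hc : 0 ≤ c) (hc' : c ≤ 3/2) (u : ℝ) :
    Summable fun n : ℕ =>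
      poch c n / (poch (3/2) n * (Nat.factorial n : ℝ)) * u ^ n :=
  (summable_B_norm hc hc' u).of_norm

lemma coeff (a : ℝ) (ha : 0 < a) (u : ℝ) (n : ℕ) :
    ∑ k ∈ range (n + 1), (-u) ^ k / (Nat.factorial k : ℝ) *
        (poch (3/2 - a) (n - k) / (poch (3/2) (n - k) * (Nat.factorial (n - k) : ℝ))
          * u ^ (n - k))
      = poch a n / (poch (3/2) n * (Nat.factorial n : ℝ)) * (-u) ^ n := by
  set c : ℝ := 3/2 - a with hc
  rw [← Finset.sum_range_reflect]
  have step : ∀ k ∈ range (n + 1),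
      (-u) ^ (n + 1 - 1 - k) / (Nat.factorial (n + 1 - 1 - k) : ℝ) *
        (poch c (n - (n + 1 - 1 - k)) /
          (poch (3/2) (n - (n + 1 - 1 - k)) * (Nat.factorial (n - (n + 1 - 1 - k)) : ℝ))
          * u ^ (n - (n + 1 - 1 - k)))
      = ((-1:ℝ) ^ n * u ^ n / (Nat.factorial n : ℝ)) *
          ((-1:ℝ) ^ k * (n.choose k) * poch c k / poch (3/2) k) := by
    intro k hk
    have hkn : k ≤ n := Nat.lt_succ_iff.mp (mem_range.mp hk)
    have e1 : n + 1 - 1 - k = n - k := by omega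
    have e2 : n - (n - k) = k := Nat.sub_sub_self hkn
    rw [e1, e2]
    have h2 : (-1:ℝ) ^ n * (-1:ℝ) ^ k = (-1:ℝ) ^ (n - k) := by
      have h := pow_add (-1:ℝ) (n - k) k
      rw [Nat.sub_add_cancel hkn] at h
      have hsq : (-1:ℝ) ^ k * (-1:ℝ) ^ k = 1 := by
        rw [← pow_add, ← two_mul, pow_mul]; norm_num
      calc (-1:ℝ) ^ n * (-1:ℝ) ^ k = ((-1:ℝ) ^ (n-k) * (-1:ℝ)^k) * (-1:ℝ)^k := by rw [← h]
        _ = (-1:ℝ) ^ (n-k) * ((-1:ℝ)^k * (-1:ℝ)^k) := by ring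
        _ = (-1:ℝ) ^ (n - k) := by rw [hsq, mul_one]
    have h3 : u ^ (n - k) * u ^ k = u ^ n := by
      rw [← pow_add, Nat.sub_add_cancel hkn]
    have h4 : ((n.choose k : ℕ) : ℝ)
        = (Nat.factorial n : ℝ) / ((Nat.factorial k : ℝ) * (Nat.factorial (n - k) : ℝ)) :=
      Nat.cast_choose ℝ hkn
    have hfn : ((Nat.factorial n : ℕ) : ℝ) ≠ 0 := by positivity
    have hfk : ((Nat.factorial k : ℕ) : ℝ) ≠ 0 := by positivity
    have hfnk : ((Nat.factorial (n - k) : ℕ) : ℝ) ≠ 0 := by positivity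
    have hp32 : poch (3/2) k ≠ 0 := ne_of_gt (poch_pos (by norm_num) k)
    rw [neg_pow u (n - k), ← h2, h4, ← h3]
    field_simp
  rw [sum_congr rfl step, ← mul_sum, cv n (3/2) c (by norm_num),
    show (3:ℝ)/2 - c = a by rw [hc]; ring, neg_pow u n]
  have hp32n : poch (3/2) n ≠ 0 := ne_of_gt (poch_pos (by norm_num) n)
  have hfn : ((Nat.factorial n : ℕ) : ℝ) ≠ 0 := by positivity
  field_simp

lemma kummer (a : ℝ) (ha : 0 < a) (ha' : a ≤ 3/2) (u : ℝ) :
    ∑' n : ℕ, poch a n / (poch (3/2) n * (Nat.factorial n : ℝ)) * (-u) ^ n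
      = Real.exp (-u)
        * ∑' n : ℕ, poch (3/2 - a) n / (poch (3/2) n * (Nat.factorial n : ℝ)) * u ^ n := by
  have hc : (0:ℝ) ≤ 3/2 - a := by linarith
  have hc' : (3:ℝ)/2 - a ≤ 3/2 := by linarith
  rw [exp_tsum (-u),
    tsum_mul_tsum_eq_tsum_sum_antidiagonal_of_summable_norm
      (summable_exp_norm (-u)) (summable_B_norm hc hc' u)]
  refine (tsum_congr fun n => ?_).symm
  rw [Finset.Nat.sum_antidiagonal_eq_sum_range_succ_mk]
  exact coeff a ha u n





lemma gamma_poch {a : ℝ} (ha : 0 < a) : ∀ n : ℕ, Real.Gamma (a + n) = Real.Gamma a * poch a n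
  | 0 => by simp [poch]
  | n + 1 => by
      have h : a + ((n:ℕ)+1 : ℕ) = (a + n) + 1 := by push_cast; ring
      rw [h, Real.Gamma_add_one (by positivity), gamma_poch ha n]
      show _ = Real.Gamma a * (poch a n * (a + n))
      ring

lemma moment {s : ℝ} (hs : -1 < s) :
    ∫ x in Ioi (0:ℝ), x ^ s * Real.exp (-x^2) = Real.Gamma ((s+1)/2) / 2 := by
  have h := integral_rpow_mul_exp_neg_rpow (p := 2) (q := s) two_pos hs
  have e : ∀ x ∈ Ioi (0:ℝ), x ^ s * Real.exp (-x ^ (2:ℝ)) = x ^ s * Real.exp (-x^2) := by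
    intro x _
    rw [show (2:ℝ) = ((2:ℕ):ℝ) by norm_num, Real.rpow_natCast]
  rw [setIntegral_congr_fun measurableSet_Ioi e] at h
  rw [h]; ring

lemma integrable_mom {s : ℝ} (hs : -1 < s) :
    IntegrableOn (fun x : ℝ => x ^ s * Real.exp (-x^2)) (Ioi 0) := by
  have h := integrableOn_rpow_mul_exp_neg_mul_sq one_pos hs
  refine h.congr_fun (fun x _ => ?_) measurableSet_Ioi
  simp

variable {p : ℝ}

lemma aux_eqon (hp0 : 0 < p) (v : ℝ) (n : ℕ) : ∀ x ∈ Ioi (0:ℝ),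
    x ^ (p - 1) * Real.exp (-x ^ 2) * ((v * x) ^ (2*n+1) / ((Nat.factorial (2*n+1)) : ℝ))
      = (v ^ (2*n+1) / ((Nat.factorial (2*n+1)) : ℝ)) * (x ^ (p + 2*n) * Real.exp (-x^2)) := by
  intro x hx
  have hx0 : (0:ℝ) < x := hx
  have e3 : p + 2*(n:ℝ) = (p - 1) + ((2*n+1 : ℕ) : ℝ) := by push_cast; ring
  have hxp : x ^ (p + 2*(n:ℝ)) = x ^ (p - 1) * x ^ (2*n+1 : ℕ) := by
    rw [e3, Real.rpow_add hx0, Real.rpow_natCast]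
  have : (p + 2*↑n) = (p + 2*(n:ℝ)) := by norm_num
  rw [this, hxp, mul_pow]
  ring

lemma aux_int (hp0 : 0 < p) (v : ℝ) (n : ℕ) :
    ∫ x in Ioi (0:ℝ),
        x ^ (p - 1) * Real.exp (-x ^ 2) * ((v * x) ^ (2*n+1) / ((Nat.factorial (2*n+1)) : ℝ))
      = v ^ (2*n+1) / ((Nat.factorial (2*n+1)) : ℝ) * (Real.Gamma ((p+1)/2 + n) / 2) := by
  have hn : (0:ℝ) ≤ (n:ℝ) := Nat.cast_nonneg n
  have hs : (-1:ℝ) < p + 2*n := by linarith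
  rw [setIntegral_congr_fun measurableSet_Ioi (aux_eqon hp0 v n), integral_const_mul,
    moment hs, show (p + 2*(n:ℝ) + 1)/2 = (p+1)/2 + n by ring]

lemma integrable_Fn (hp0 : 0 < p) (w : ℝ) (n : ℕ) :
    IntegrableOn (fun x : ℝ => x ^ (p - 1) * Real.exp (-x ^ 2) *
        ((-1:ℝ)^n * (w * x) ^ (2*n+1) / ((Nat.factorial (2*n+1)) : ℝ))) (Ioi 0) := by
  have hn : (0:ℝ) ≤ (n:ℝ) := Nat.cast_nonneg n
  have hs : (-1:ℝ) < p + 2*n := by linarith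
  have base : IntegrableOn (fun x : ℝ => ((-1:ℝ)^n * (w ^ (2*n+1) / ((Nat.factorial (2*n+1)) : ℝ)))
      * (x ^ (p + 2*n) * Real.exp (-x^2))) (Ioi 0) :=
    (integrable_mom hs).const_mul ((-1:ℝ)^n * (w ^ (2*n+1) / ((Nat.factorial (2*n+1)) : ℝ)))
  refine IntegrableOn.congr_fun base (fun x hx => ?_) measurableSet_Ioi
  have h := aux_eqon hp0 w n x hx
  calc ((-1:ℝ)^n * (w ^ (2*n+1) / ((Nat.factorial (2*n+1)) : ℝ)))
        * (x ^ (p + 2*n) * Real.exp (-x^2))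
      = (-1:ℝ)^n * ((w ^ (2*n+1) / ((Nat.factorial (2*n+1)) : ℝ))
          * (x ^ (p + 2*n) * Real.exp (-x^2))) := by ring
    _ = (-1:ℝ)^n * (x ^ (p - 1) * Real.exp (-x ^ 2)
          * ((w * x) ^ (2*n+1) / ((Nat.factorial (2*n+1)) : ℝ))) := by rw [← h]
    _ = x ^ (p - 1) * Real.exp (-x ^ 2) *
          ((-1:ℝ)^n * (w * x) ^ (2*n+1) / ((Nat.factorial (2*n+1)) : ℝ)) := by ring


lemma norm_Fn (w : ℝ) (n : ℕ) : ∀ x ∈ Ioi (0:ℝ),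
    ‖x ^ (p - 1) * Real.exp (-x ^ 2) *
        ((-1:ℝ)^n * (w * x) ^ (2*n+1) / ((Nat.factorial (2*n+1)) : ℝ))‖
      = x ^ (p - 1) * Real.exp (-x ^ 2) *
          ((|w| * x) ^ (2*n+1) / ((Nat.factorial (2*n+1)) : ℝ)) := by
  intro x hx
  have hx0 : (0:ℝ) < x := hx
  rw [Real.norm_eq_abs, abs_mul, abs_mul, abs_of_nonneg (Real.rpow_nonneg hx0.le _),
    abs_of_nonneg (Real.exp_pos _).le, abs_div, abs_mul, abs_pow, abs_pow, abs_neg, abs_one,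
    one_pow, one_mul, abs_mul, abs_of_nonneg hx0.le,
    abs_of_nonneg (by positivity : (0:ℝ) ≤ ((Nat.factorial (2*n+1)) : ℝ))]

lemma fp_eq (hp0 : 0 < p) (hp2 : p < 2) (w : ℝ) :
    (∫ x in Ioi (0:ℝ), x ^ (p - 1) * Real.exp (-x ^ 2) * Real.sin (w * x))
      = (Real.Gamma ((p+1)/2) * w / 2) * (Real.exp (-(w^2/4))
          * ∑' n : ℕ, poch (3/2 - (p+1)/2) n / (poch (3/2) n * (Nat.factorial n : ℝ))
              * (w^2/4) ^ n) := by
  set a : ℝ := (p+1)/2 with ha_def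
  have ha : 0 < a := by rw [ha_def]; linarith
  have ha' : a ≤ 3/2 := by rw [ha_def]; linarith
  have hΓ : 0 < Real.Gamma a := Real.Gamma_pos_of_pos ha
  set F : ℕ → ℝ → ℝ := fun n x => x ^ (p - 1) * Real.exp (-x ^ 2) *
      ((-1:ℝ)^n * (w * x) ^ (2*n+1) / ((Nat.factorial (2*n+1)) : ℝ)) with hF
  have hint : ∀ n, Integrable (F n) (volume.restrict (Ioi 0)) := fun n => integrable_Fn hp0 w n
  have hIval : ∀ n, (∫ x in Ioi (0:ℝ), F n x)
      = (-1:ℝ)^n * (w ^ (2*n+1) / ((Nat.factorial (2*n+1)) : ℝ) * (Real.Gamma (a + n) / 2)) := by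
    intro n
    have he : ∀ x ∈ Ioi (0:ℝ), F n x = (-1:ℝ)^n *
        (x ^ (p - 1) * Real.exp (-x ^ 2) *
          ((w * x) ^ (2*n+1) / ((Nat.factorial (2*n+1)) : ℝ))) := by
      intro x hx; rw [hF]; ring
    rw [setIntegral_congr_fun measurableSet_Ioi he, integral_const_mul, aux_int hp0 w n]
  have hNval : ∀ n, (∫ x in Ioi (0:ℝ), ‖F n x‖)
      = |w| ^ (2*n+1) / ((Nat.factorial (2*n+1)) : ℝ) * (Real.Gamma (a + n) / 2) := by
    intro n
    rw [setIntegral_congr_fun measurableSet_Ioi (norm_Fn w n), aux_int hp0 |w| n]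
  have hsum : Summable fun n => ∫ x in Ioi (0:ℝ), ‖F n x‖ := by
    have hb : Summable (fun n : ℕ =>
        (Real.Gamma a * |w| / 2) * ((w^2/4)^n / (Nat.factorial n : ℝ))) :=
      (Real.summable_pow_div_factorial (w^2/4)).mul_left _
    refine Summable.of_nonneg_of_le (fun n => ?_) (fun n => ?_) hb
    · rw [hNval n]
      have := Real.Gamma_pos_of_pos (show (0:ℝ) < a + n by positivity)
      positivity
    · rw [hNval n, gamma_poch ha n, fact_eq n]
      have h32 : (0:ℝ) < poch (3/2) n := poch_pos (by norm_num) n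
      have hfn : (0:ℝ) < (Nat.factorial n : ℝ) := by positivity
      have h1 : |w| ^ (2*n+1) = (w^2)^n * |w| := by
        rw [pow_succ, pow_mul, sq_abs]
      have e : |w| ^ (2*n+1) / (4^n * poch (3/2) n * (Nat.factorial n : ℝ))
            * (Real.Gamma a * poch a n / 2)
          = (Real.Gamma a * |w| / 2) * ((w^2/4)^n / (Nat.factorial n : ℝ))
              * (poch a n / poch (3/2) n) := by
        rw [h1, div_pow]
        field_simp
      rw [e]
      have hle : poch a n / poch (3/2) n ≤ 1 :=
        (div_le_one h32).mpr (poch_le_poch ha.le ha' n)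
      calc (Real.Gamma a * |w| / 2) * ((w^2/4)^n / (Nat.factorial n : ℝ))
              * (poch a n / poch (3/2) n)
          ≤ (Real.Gamma a * |w| / 2) * ((w^2/4)^n / (Nat.factorial n : ℝ)) * 1 := by
            refine mul_le_mul_of_nonneg_left hle ?_
            positivity
        _ = (Real.Gamma a * |w| / 2) * ((w^2/4)^n / (Nat.factorial n : ℝ)) := by ring
  have hpt : ∀ x ∈ Ioi (0:ℝ),
      x ^ (p - 1) * Real.exp (-x ^ 2) * Real.sin (w * x) = ∑' n, F n x := by
    intro x hx
    rw [Real.sin_eq_tsum (w * x), ← tsum_mul_left]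
  calc (∫ x in Ioi (0:ℝ), x ^ (p - 1) * Real.exp (-x ^ 2) * Real.sin (w * x))
      = ∫ x in Ioi (0:ℝ), ∑' n, F n x := setIntegral_congr_fun measurableSet_Ioi hpt
    _ = ∑' n, ∫ x in Ioi (0:ℝ), F n x :=
        (integral_tsum_of_summable_integral_norm hint hsum).symm
    _ = ∑' n, (Real.Gamma a * w / 2)
          * (poch a n / (poch (3/2) n * (Nat.factorial n : ℝ)) * (-(w^2/4))^n) := by
        refine tsum_congr fun n => ?_
        rw [hIval n, gamma_poch ha n, fact_eq n]
        have h32 : poch (3/2) n ≠ 0 := ne_of_gt (poch_pos (by norm_num) n)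
        have hfn : ((Nat.factorial n : ℕ) : ℝ) ≠ 0 := by positivity
        have h1 : w ^ (2*n+1) = (w^2)^n * w := by rw [pow_succ, pow_mul]
        have h2 : (-(w^2/4))^n = (-1:ℝ)^n * (w^2/4)^n := neg_pow _ n
        rw [h1, h2, div_pow]
        field_simp
    _ = (Real.Gamma a * w / 2)
          * ∑' n, poch a n / (poch (3/2) n * (Nat.factorial n : ℝ)) * (-(w^2/4))^n :=
        tsum_mul_left
    _ = (Real.Gamma a * w / 2) * (Real.exp (-(w^2/4))
          * ∑' n : ℕ, poch (3/2 - a) n / (poch (3/2) n * (Nat.factorial n : ℝ))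
              * (w^2/4) ^ n) := by
        rw [kummer a ha ha' (w^2/4)]

end FpAux

open FpAux

/-- `f_p(w) = ∫₀^∞ x^{p-1} e^{-x²} sin(wx) dx`. -/
noncomputable def fp (p : ℝ) (w : ℝ) : ℝ :=
  ∫ x in Set.Ioi (0 : ℝ), x ^ (p - 1) * Real.exp (-x ^ 2) * Real.sin (w * x)

theorem fp_ne_zero_of_ne_zero (p : ℝ) (hp0 : 0 < p) (hp2 : p < 2) :
    ∀ w : ℝ, w ≠ 0 → fp p w ≠ 0 := by
  intro w hw
  have hc : (0:ℝ) ≤ 3/2 - (p+1)/2 := by linarith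
  have hc' : (3:ℝ)/2 - (p+1)/2 ≤ 3/2 := by linarith
  have htsum : 0 < ∑' n : ℕ, poch (3/2 - (p+1)/2) n
      / (poch (3/2) n * (Nat.factorial n : ℝ)) * (w^2/4) ^ n := by
    refine Summable.tsum_pos (summable_B hc hc' (w^2/4))
      (fun n => mul_nonneg (B_nonneg hc n) (by positivity)) 0 ?_
    simp [poch]
  rw [show fp p w = _ from fp_eq hp0 hp2 w]
  apply mul_ne_zero
  · have hΓ : 0 < Real.Gamma ((p+1)/2) := Real.Gamma_pos_of_pos (by linarith)
    exact div_ne_zero (mul_ne_zero (ne_of_gt hΓ) hw) two_ne_zero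
  · exact mul_ne_zero (Real.exp_ne_zero _) (ne_of_gt htsum)
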